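/- Let A be an ungraded commutative symmetric open Frobenius algebra. Define on relative Hochschild chains the product x ∗ y := Σ_{(a_0)} a_0'[a_1,...,a_p, a_0''b_0, b_1,...,b_q] for x = a_0[a_1,...,a_p], y = b_0[b_1,...,b_q]. Then ∗ is strictly associative: (x∗y)∗z = x∗(y∗z). -/
import Mathlib


open TensorProduct

variable {k A : Type} [Field k] [CommRing A] [Algebra k A]

/-- Hochschild chains modelled as `A ⊗ T(A)`: a chain `a₀[a₁,…,aₚ]` is
`a₀ ⊗ (ι a₁ * ⋯ * ι aₚ)` in `A ⊗ TensorAlgebra k A`. -/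
noncomputable abbrev HChains (k A : Type) [Field k] [CommRing A] [Algebra k A] :=
  A ⊗[k] TensorAlgebra k A

/-- The chain `a₀[a₁,…,aₚ]`. -/
noncomputable def hchain (a₀ : A) (ℓ : List A) : HChains k A :=
  a₀ ⊗ₜ[k] (ℓ.map (fun a => TensorAlgebra.ι k a)).prod

/-- The product `x ∗ y` on (relative) Hochschild chains of a commutative symmetric
open Frobenius algebra: on generators,
`a₀[a₁,…,aₚ] ∗ b₀[b₁,…,b_q] = Σ (a₀b₀)'[a₁,…,aₚ,(a₀b₀)'',b₁,…,b_q]`. -/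
noncomputable def hstar (δ : A →ₗ[k] A ⊗[k] A) :
    (HChains k A) ⊗[k] (HChains k A) →ₗ[k] HChains k A :=
  let T := TensorAlgebra k A
  let ι : A →ₗ[k] T := TensorAlgebra.ι k
  let inner : A ⊗[k] (T ⊗[k] T) →ₗ[k] T :=
    LinearMap.mul' k T ∘ₗ
      (TensorProduct.map LinearMap.id
        (LinearMap.mul' k T ∘ₗ TensorProduct.map ι LinearMap.id)) ∘ₗ
      (TensorProduct.leftComm k A T T).toLinearMap
  (TensorProduct.map LinearMap.id inner) ∘ₗ
    (TensorProduct.assoc k A A (T ⊗[k] T)).toLinearMap ∘ₗ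
    (TensorProduct.map (δ ∘ₗ LinearMap.mul' k A) LinearMap.id) ∘ₗ
    (TensorProduct.tensorTensorTensorComm k A T A T).toLinearMap


/-- `gmap s t : d ↦ s * (ι d * t)`. -/
noncomputable def gmap (s t : TensorAlgebra k A) : A →ₗ[k] TensorAlgebra k A :=
  LinearMap.mulLeft k s ∘ₗ LinearMap.mulRight k t ∘ₗ TensorAlgebra.ι k

@[simp] lemma gmap_apply (s t : TensorAlgebra k A) (d : A) :
    gmap s t d = s * (TensorAlgebra.ι k d * t) := rfl

set_option maxHeartbeats 1000000 in
set_option synthInstance.maxHeartbeats 1000000 in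
lemma hstar_tmul (δ : A →ₗ[k] A ⊗[k] A) (a b : A) (s t : TensorAlgebra k A) :
    hstar δ ((a ⊗ₜ[k] s) ⊗ₜ[k] (b ⊗ₜ[k] t)) =
      (TensorProduct.map LinearMap.id (gmap s t)) (δ (a * b)) := by
  simp only [hstar, LinearMap.comp_apply, LinearEquiv.coe_coe,
    tensorTensorTensorComm_tmul, map_tmul, LinearMap.id_apply]
  rw [LinearMap.mul'_apply]
  generalize δ (a * b) = v
  induction v using TensorProduct.induction_on with
  | zero => simp
  | tmul c d =>
      simp [gmap, TensorProduct.leftComm_tmul, TensorProduct.assoc_tmul]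
  | add v₁ v₂ h₁ h₂ => simp only [add_tmul, map_add, h₁, h₂]

/-- The coproduct determined by a fixed element `w` (meant to be `δ 1`). -/
noncomputable def deltaOf (w : A ⊗[k] A) : A →ₗ[k] A ⊗[k] A where
  toFun x := x • w
  map_add' x y := add_smul x y w
  map_smul' r x := smul_assoc r x w

@[simp] lemma deltaOf_apply (w : A ⊗[k] A) (x : A) : deltaOf w x = x • w := rfl

@[simp] lemma deltaOf_zero : deltaOf (0 : A ⊗[k] A) = 0 := by
  ext x; simp

@[simp] lemma deltaOf_add (v v' : A ⊗[k] A) :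
    deltaOf (v + v') = deltaOf v + deltaOf v' := by
  ext x; simp [smul_add]

set_option synthInstance.maxHeartbeats 1000000 in
@[simp] lemma hstar_zero : hstar (0 : A →ₗ[k] A ⊗[k] A) = 0 := by
  simp [hstar, LinearMap.zero_comp, LinearMap.comp_zero, TensorProduct.map_zero_left]

set_option synthInstance.maxHeartbeats 1000000 in
lemma hstar_add (δ₁ δ₂ : A →ₗ[k] A ⊗[k] A) :
    hstar (δ₁ + δ₂) = hstar δ₁ + hstar δ₂ := by
  simp [hstar, LinearMap.add_comp, LinearMap.comp_add, TensorProduct.map_add_left]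

lemma map_mulLeft_id_eq_smul (x : A) (v : A ⊗[k] A) :
    (TensorProduct.map (LinearMap.mulLeft k x) LinearMap.id) v = x • v := by
  induction v using TensorProduct.induction_on with
  | zero => simp
  | tmul e f => simp [smul_tmul', LinearMap.mulLeft_apply]
  | add v₁ v₂ h₁ h₂ => simp [h₁, h₂]

set_option synthInstance.maxHeartbeats 1000000 in
lemma hstar_deltaOf_tmul (w : A ⊗[k] A) (a b : A) (s t : TensorAlgebra k A) :
    hstar (deltaOf w) ((a ⊗ₜ[k] s) ⊗ₜ[k] (b ⊗ₜ[k] t)) =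
      (TensorProduct.map (LinearMap.mulLeft k (a * b)) (gmap s t)) w := by
  rw [hstar_tmul, deltaOf_apply]
  induction w using TensorProduct.induction_on with
  | zero => simp
  | tmul e f => simp [smul_tmul', LinearMap.mulLeft_apply, mul_assoc]
  | add v₁ v₂ h₁ h₂ => simp [smul_add, h₁, h₂]

set_option maxHeartbeats 1000000 in
set_option synthInstance.maxHeartbeats 1000000 in
lemma key (w₁ w₂ : A ⊗[k] A) :
    ∀ x y z : HChains k A,
      hstar (deltaOf w₂) ((hstar (deltaOf w₁) (x ⊗ₜ[k] y)) ⊗ₜ[k] z) =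
        hstar (deltaOf w₁) (x ⊗ₜ[k] (hstar (deltaOf w₂) (y ⊗ₜ[k] z))) := by
  intro x y z
  induction x using TensorProduct.induction_on with
  | zero => simp
  | add x₁ x₂ h₁ h₂ => simp only [add_tmul, map_add, tmul_add, h₁, h₂]
  | tmul a s =>
  induction y using TensorProduct.induction_on with
  | zero => simp
  | add y₁ y₂ h₁ h₂ => simp only [add_tmul, tmul_add, map_add, h₁, h₂]
  | tmul b t =>
  induction z using TensorProduct.induction_on with
  | zero => simp
  | add z₁ z₂ h₁ h₂ => simp only [add_tmul, tmul_add, map_add, h₁, h₂]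
  | tmul c u =>
  rw [hstar_deltaOf_tmul w₁ a b s t, hstar_deltaOf_tmul w₂ b c t u]
  induction w₁ using TensorProduct.induction_on with
  | zero => simp
  | add v₁ v₂ h₁ h₂ =>
      simp only [map_add, add_tmul, deltaOf_add, hstar_add, LinearMap.add_apply, h₁, h₂]
  | tmul e₁ f₁ =>
  rw [map_tmul, LinearMap.mulLeft_apply, hstar_deltaOf_tmul w₂]
  induction w₂ using TensorProduct.induction_on with
  | zero => simp
  | add v₁ v₂ h₁ h₂ => simp only [map_add, tmul_add, h₁, h₂]
  | tmul e₂ f₂ =>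
  rw [map_tmul, map_tmul, LinearMap.mulLeft_apply, hstar_deltaOf_tmul (e₁ ⊗ₜ[k] f₁),
    map_tmul, LinearMap.mulLeft_apply]
  simp only [gmap_apply]
  congr 1
  · simp only [LinearMap.mulLeft_apply]; ring
  · simp [mul_assoc]

/-- for an ungraded commutative symmetric open Frobenius algebra, the
product `x ∗ y = Σ_{(a₀)} a₀'[a₁,…,aₚ,a₀''b₀,b₁,…,b_q]` on relative Hochschild chains
is strictly associative. -/
theorem hstar_assoc (δ : A →ₗ[k] A ⊗[k] A)
    (hcoassoc : ∀ x : A,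
      (TensorProduct.assoc k A A A) ((TensorProduct.map δ LinearMap.id) (δ x)) =
        (TensorProduct.map LinearMap.id δ) (δ x))
    (hright : ∀ x y : A,
      δ (x * y) = (TensorProduct.map LinearMap.id (LinearMap.mulRight k y)) (δ x))
    (hleft : ∀ x y : A,
      δ (x * y) = (TensorProduct.map (LinearMap.mulLeft k x) LinearMap.id) (δ y))
    (hsymm : (TensorProduct.comm k A A) (δ 1) = δ 1) :
    ∀ x y z : HChains k A,
      hstar δ ((hstar δ (x ⊗ₜ[k] y)) ⊗ₜ[k] z) = hstar δ (x ⊗ₜ[k] (hstar δ (y ⊗ₜ[k] z))) := by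
  have hδ : δ = deltaOf (δ 1) := by
    ext x
    have := hleft x 1
    rw [mul_one] at this
    rw [this, map_mulLeft_id_eq_smul, deltaOf_apply]
  rw [hδ]
  exact key (δ 1) (δ 1)
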